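/- A finite simple bipartite graph G with no isolated vertices is unmixed if and only if it has a perfect matching {x_1,y_1},...,{x_n,y_n} with x_i in one part and y_i in the other, such that for each i the induced subgraph on N(x_i) ∪ N(y_i) is complete bipartite (every vertex of N(y_i) is adjacent to every vertex of N(x_i)). -/

import Mathlib

open SimpleGraph MvPolynomial

variable {V : Type*}

/-- `s` is an independent set of the graph `G`. -/
def IsIndep (G : SimpleGraph V) (s : Set V) : Prop :=
  s.Pairwise fun a b => ¬ G.Adj a b

/-- `s` is a maximal independent set of the graph `G`. -/
def IsMaxIndep (G : SimpleGraph V) (s : Set V) : Prop :=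
  IsIndep G s ∧ ∀ t : Set V, IsIndep G t → s ⊆ t → s = t

/-- `G` is unmixed: all maximal independent sets have the same cardinality. -/
def Unmixed (G : SimpleGraph V) : Prop :=
  ∀ s t : Set V, IsMaxIndep G s → IsMaxIndep G t → s.ncard = t.ncard

/-- `V1, V2` form a bipartition of the graph `G`. -/
def IsBipartition (G : SimpleGraph V) (V1 V2 : Set V) : Prop :=
  Disjoint V1 V2 ∧ V1 ∪ V2 = Set.univ ∧
    ∀ ⦃a b⦄, G.Adj a b → (a ∈ V1 ∧ b ∈ V2) ∨ (a ∈ V2 ∧ b ∈ V1)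

/-- `G` has no isolated vertices. -/
def NoIsolated (G : SimpleGraph V) : Prop := ∀ v, ∃ w, G.Adj v w

/-- The edges `{x i, y i}` form a perfect matching of `G`. -/
def PMatch (G : SimpleGraph V) (n : ℕ) (x y : Fin n → V) : Prop :=
  Function.Injective x ∧ Function.Injective y ∧ (∀ i j, x i ≠ y j) ∧
    (∀ v, (∃ i, v = x i) ∨ (∃ i, v = y i)) ∧ ∀ i, G.Adj (x i) (y i)

/-- Condition 1: for each `i` the induced subgraph on `N(x i) ∪ N(y i)` is complete
bipartite, i.e. every vertex of `N(y i)` is adjacent to every vertex of `N(x i)`. -/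
def Cond1 (G : SimpleGraph V) (n : ℕ) (x y : Fin n → V) : Prop :=
  ∀ i, ∀ a ∈ G.neighborSet (y i), ∀ b ∈ G.neighborSet (x i), G.Adj a b

/-- Condition 2: for `i ≠ j`, not both `x i ~ y j` and `x j ~ y i`. -/
def Cond2 (G : SimpleGraph V) (n : ℕ) (x y : Fin n → V) : Prop :=
  ∀ i j, i ≠ j → G.Adj (x i) (y j) → ¬ G.Adj (x j) (y i)

lemma exists_maxIndep [Fintype V] (G : SimpleGraph V) {s : Set V} (hs : IsIndep G s) :
    ∃ t, s ⊆ t ∧ IsMaxIndep G t := by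
  classical
  have hF : {t : Set V | IsIndep G t ∧ s ⊆ t}.Finite := Set.toFinite _
  obtain ⟨t, ht, hmax⟩ := Set.Finite.exists_maximalFor Set.ncard _ hF ⟨s, hs, subset_rfl⟩
  refine ⟨t, ht.2, ht.1, fun u hu hsu => ?_⟩
  have hu' : u ∈ {t : Set V | IsIndep G t ∧ s ⊆ t} := ⟨hu, ht.2.trans hsu⟩
  have h1 : t.ncard ≤ u.ncard := Set.ncard_le_ncard hsu u.toFinite
  exact Set.eq_of_subset_of_ncard_le hsu (hmax hu' h1).ge u.toFinite

lemma exists_adj_of_not_indep_insert (G : SimpleGraph V) {s : Set V} (hs : IsIndep G s)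
    {v : V} (h : ¬ IsIndep G (insert v s)) : ∃ b ∈ s, G.Adj v b := by
  by_contra hc
  push_neg at hc
  apply h
  intro a ha b hb hne hab
  rcases ha with rfl | ha
  · rcases hb with rfl | hb
    · exact hne rfl
    · exact hc b hb hab
  · rcases hb with rfl | hb
    · exact hc a ha hab.symm
    · exact hs ha hb hne hab

lemma bip_maxIndep (G : SimpleGraph V) (V1 V2 : Set V) (hb : IsBipartition G V1 V2)
    (hni : NoIsolated G) : IsMaxIndep G V1 := by
  obtain ⟨hd, hu, hadj⟩ := hb
  constructor
  · intro a ha b hbm _ hab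
    rcases hadj hab with ⟨_, h2⟩ | ⟨h1, _⟩
    · exact Set.disjoint_left.mp hd hbm h2
    · exact Set.disjoint_left.mp hd ha h1
  · intro t ht hsub
    refine subset_antisymm hsub fun v hv => ?_
    by_contra hvn
    have hv2 : v ∈ V2 := by
      have : v ∈ V1 ∪ V2 := hu.symm ▸ Set.mem_univ v
      exact this.resolve_left hvn
    obtain ⟨w, hw⟩ := hni v
    have hw1 : w ∈ V1 := by
      rcases hadj hw with ⟨h1, _⟩ | ⟨_, h2⟩
      · exact absurd h1 hvn
      · exact h2
    exact ht hv (hsub hw1) hw.ne hw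

lemma unmixed_of_match [Fintype V] (G : SimpleGraph V) (n : ℕ) (x y : Fin n → V)
    (hm : PMatch G n x y) (hc : Cond1 G n x y) : Unmixed G := by
  classical
  obtain ⟨hxinj, hyinj, hxy, hcov, hadjm⟩ := hm
  suffices key : ∀ s, IsMaxIndep G s → s.ncard = n by
    intro s t hs ht; rw [key s hs, key t ht]
  rintro s ⟨hind, hmax⟩
  have hone : ∀ i, x i ∈ s ∨ y i ∈ s := by
    intro i
    by_contra h
    push_neg at h
    obtain ⟨hx, hy⟩ := h
    have hx' : ¬ IsIndep G (insert (x i) s) := fun hind' =>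
      hx ((hmax _ hind' (Set.subset_insert _ _)) ▸ Set.mem_insert _ _)
    have hy' : ¬ IsIndep G (insert (y i) s) := fun hind' =>
      hy ((hmax _ hind' (Set.subset_insert _ _)) ▸ Set.mem_insert _ _)
    obtain ⟨b, hbs, hb⟩ := exists_adj_of_not_indep_insert G hind hx'
    obtain ⟨a, has, ha⟩ := exists_adj_of_not_indep_insert G hind hy'
    have hab : G.Adj a b := hc i a ha b hb
    exact hind has hbs hab.ne hab
  set f : Fin n → V := fun i => if x i ∈ s then x i else y i with hf
  have hfs : ∀ i, f i ∈ s := by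
    intro i
    by_cases h : x i ∈ s
    · simp [hf, h]
    · simpa [hf, h] using (hone i).resolve_left h
  have hfsurj : ∀ v ∈ s, ∃ i, f i = v := by
    intro v hv
    rcases hcov v with ⟨i, rfl⟩ | ⟨i, rfl⟩
    · exact ⟨i, by simp [hf, hv]⟩
    · refine ⟨i, ?_⟩
      have hxns : x i ∉ s := fun hxs =>
        hind hxs hv (hxy i i) (hadjm i)
      simp [hf, hxns]
  have hfinj : Function.Injective f := by
    intro i j h
    simp only [hf] at h
    by_cases hi : x i ∈ s <;> by_cases hj : x j ∈ s <;> simp [hi, hj] at h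
    · exact hxinj h
    · exact absurd h (hxy i j)
    · exact absurd h.symm (hxy j i)
    · exact hyinj h
  have hs_eq : s = Set.range f := by
    ext v
    constructor
    · intro hv; obtain ⟨i, hi⟩ := hfsurj v hv; exact ⟨i, hi⟩
    · rintro ⟨i, rfl⟩; exact hfs i
  rw [hs_eq, ← Set.image_univ, Set.ncard_image_of_injective _ hfinj, Set.ncard_univ]
  simp

/-- A bipartite graph with no isolated vertices is unmixed iff it has a perfect
matching `{x i, y i}` with `x i ∈ V1`, `y i ∈ V2`, satisfying condition 1. -/
theorem stmt6 [Fintype V] (G : SimpleGraph V) (V1 V2 : Set V)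
    (hb : IsBipartition G V1 V2) (hni : NoIsolated G) :
    Unmixed G ↔ ∃ (n : ℕ) (x y : Fin n → V),
      (∀ i, x i ∈ V1) ∧ (∀ i, y i ∈ V2) ∧ PMatch G n x y ∧ Cond1 G n x y := by
  classical
  constructor
  · intro hum
    obtain ⟨hd, huniv, hadj⟩ := hb
    have hb1 : IsBipartition G V1 V2 := ⟨hd, huniv, hadj⟩
    have hb2 : IsBipartition G V2 V1 :=
      ⟨hd.symm, by rw [Set.union_comm]; exact huniv, fun a b h => (hadj h).symm⟩
    have hm1 : IsMaxIndep G V1 := bip_maxIndep G V1 V2 hb1 hni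
    have hm2 : IsMaxIndep G V2 := bip_maxIndep G V2 V1 hb2 hni
    have hneigh : ∀ v ∈ V1, ∀ w, G.Adj v w → w ∈ V2 := by
      intro v hv w h
      rcases hadj h with ⟨_, h2⟩ | ⟨h1, _⟩
      · exact h2
      · exact absurd h1 (Set.disjoint_left.mp hd hv)
    have hcard : ∀ s, IsMaxIndep G s → s.ncard = V1.ncard := fun s hs => hum s V1 hs hm1
    have hVV : V2.ncard = V1.ncard := hcard V2 hm2
    haveI : Fintype ↥V1 := Fintype.ofFinite _
    haveI : Fintype ↥V2 := Fintype.ofFinite _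
    set r : ↥V1 → Finset V := fun v => G.neighborFinset v with hr
    have hall : ∀ t : Finset ↥V1, t.card ≤ (t.biUnion r).card := by
      intro t
      by_contra hlt
      push_neg at hlt
      set T : Finset V := t.biUnion r with hT
      set S : Set V := Subtype.val '' (t : Set ↥V1) with hS
      have hSV1 : S ⊆ V1 := by rintro v ⟨u, _, rfl⟩; exact u.2
      have hTV2 : (↑T : Set V) ⊆ V2 := by
        intro w hw
        simp only [hT, Finset.coe_biUnion, Set.mem_iUnion, Finset.mem_coe] at hw
        obtain ⟨u, _, hwu⟩ := hw
        rw [hr, mem_neighborFinset] at hwu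
        exact hneigh u u.2 w hwu
      set A : Set V := (V2 \ ↑T) ∪ S with hA
      have hmemT : ∀ w, ∀ u : ↥V1, u ∈ t → G.Adj ↑u w → w ∈ T := by
        intro w u hu hadj'
        simp only [hT, Finset.mem_biUnion]
        exact ⟨u, hu, by rw [hr, mem_neighborFinset]; exact hadj'⟩
      have hAind : IsIndep G A := by
        intro a ha b hbm hne hab
        rcases ha with ha | ha <;> rcases hbm with hbm | hbm
        · exact hm2.1 ha.1 hbm.1 hne hab
        · obtain ⟨u, hu, rfl⟩ := hbm
          exact ha.2 (hmemT a u hu hab.symm)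
        · obtain ⟨u, hu, rfl⟩ := ha
          exact hbm.2 (hmemT b u hu hab)
        · exact hm1.1 (hSV1 ha) (hSV1 hbm) hne hab
      obtain ⟨w, hAw, hwm⟩ := exists_maxIndep G hAind
      have h1 : A.ncard ≤ w.ncard := Set.ncard_le_ncard hAw w.toFinite
      have h2 : w.ncard = V1.ncard := hcard w hwm
      have hdisj : Disjoint (V2 \ ↑T) S :=
        Set.disjoint_of_subset Set.diff_subset hSV1 hd.symm
      have hAcard : A.ncard = (V2.ncard - T.card) + t.card := by
        rw [hA, Set.ncard_union_eq hdisj (Set.toFinite _) (Set.toFinite _),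
          Set.ncard_diff hTV2, Set.ncard_coe_finset]
        congr 1
        rw [hS, Set.ncard_image_of_injective _ Subtype.val_injective,
          Set.ncard_coe_finset]
      have hTle : T.card ≤ V2.ncard := by
        rw [← Set.ncard_coe_finset]
        exact Set.ncard_le_ncard hTV2 V2.toFinite
      omega
    obtain ⟨f, hfinj, hfr⟩ :=
      (Finset.all_card_le_biUnion_card_iff_existsInjective' r).mp hall
    have hfadj : ∀ u : ↥V1, G.Adj ↑u (f u) := by
      intro u
      have := hfr u
      rwa [hr, mem_neighborFinset] at this
    have hfV2 : ∀ u : ↥V1, f u ∈ V2 := fun u => hneigh u u.2 (f u) (hfadj u)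
    set g : ↥V1 → ↥V2 := fun u => ⟨f u, hfV2 u⟩ with hg
    have hginj : Function.Injective g := fun u v h =>
      hfinj (congrArg Subtype.val h)
    have hcardeq : Fintype.card ↥V1 = Fintype.card ↥V2 := by
      rw [← Nat.card_eq_fintype_card, ← Nat.card_eq_fintype_card,
        Nat.card_coe_set_eq, Nat.card_coe_set_eq, hVV]
    have hgbij : Function.Bijective g :=
      (Fintype.bijective_iff_injective_and_card g).mpr ⟨hginj, hcardeq⟩
    set n := V1.ncard with hn
    have hcard1 : Fintype.card ↥V1 = n := by
      rw [← Nat.card_eq_fintype_card, Nat.card_coe_set_eq]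
    set e : Fin n ≃ ↥V1 := (Fintype.equivFinOfCardEq hcard1).symm with he
    refine ⟨n, fun i => ↑(e i), fun i => ↑(g (e i)), fun i => (e i).2,
      fun i => (g (e i)).2, ⟨?_, ?_, ?_, ?_, ?_⟩, ?_⟩
    · intro i j h
      exact e.injective (Subtype.ext h)
    · intro i j h
      exact e.injective (hginj (Subtype.ext h))
    · intro i j h
      have h2 : (↑(e i) : V) ∈ V2 := by rw [show (↑(e i) : V) = ↑(g (e j)) from h]; exact (g (e j)).2
      exact Set.disjoint_left.mp hd (e i).2 h2
    · intro v
      have hv : v ∈ V1 ∪ V2 := huniv.symm ▸ Set.mem_univ v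
      rcases hv with hv | hv
      · exact Or.inl ⟨e.symm ⟨v, hv⟩, by simp⟩
      · obtain ⟨u, hu⟩ := hgbij.2 ⟨v, hv⟩
        refine Or.inr ⟨e.symm u, ?_⟩
        have hfu : (↑(g u) : V) = v := congrArg Subtype.val hu
        show v = ↑(g (e (e.symm u)))
        rw [Equiv.apply_symm_apply, hfu]
    · intro i
      exact hfadj (e i)
    · -- Cond1
      intro i a ha b hbm
      by_contra hnadj
      have hxV1 : (↑(e i) : V) ∈ V1 := (e i).2
      have hyV2 : (↑(g (e i)) : V) ∈ V2 := (g (e i)).2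
      have ha' : G.Adj (↑(g (e i)) : V) a := ha
      have hb' : G.Adj (↑(e i) : V) b := hbm
      have haV1 : a ∈ V1 := by
        rcases hadj ha' with ⟨h1, _⟩ | ⟨_, h2⟩
        · exact absurd h1 (Set.disjoint_right.mp hd hyV2)
        · exact h2
      have hbV2 : b ∈ V2 := hneigh _ hxV1 b hb'
      have hpair : IsIndep G {a, b} := by
        intro u hu w hw hne hadj'
        rcases hu with rfl | hu <;> rcases hw with rfl | hw
        · exact hne rfl
        · rw [Set.mem_singleton_iff] at hw; subst hw; exact hnadj hadj'
        · rw [Set.mem_singleton_iff] at hu; subst hu; exact hnadj hadj'.symm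
        · rw [Set.mem_singleton_iff] at hu hw; subst hu; subst hw; exact hne rfl
      obtain ⟨w, hABw, hwm⟩ := exists_maxIndep G hpair
      have haw : a ∈ w := hABw (Set.mem_insert _ _)
      have hbw : b ∈ w := hABw (Set.mem_insert_of_mem _ rfl)
      set x : Fin n → V := fun j => ↑(e j) with hx
      set y : Fin n → V := fun j => ↑(g (e j)) with hy
      have hxns : x i ∉ w := fun hxw => hwm.1 hxw hbw hb'.ne hb'
      have hyns : y i ∉ w := fun hyw => hwm.1 hyw haw ha'.ne ha'
      have hwcard : w.ncard = n := hcard w hwm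
      -- cover
      have hcov : ∀ v, ∃ j, v = x j ∨ v = y j := by
        intro v
        have hv : v ∈ V1 ∪ V2 := huniv.symm ▸ Set.mem_univ v
        rcases hv with hv | hv
        · exact ⟨e.symm ⟨v, hv⟩, Or.inl (by simp [hx])⟩
        · obtain ⟨u, hu⟩ := hgbij.2 ⟨v, hv⟩
          refine ⟨e.symm u, Or.inr ?_⟩
          have hfu : (↑(g u) : V) = v := congrArg Subtype.val hu
          show v = ↑(g (e (e.symm u)))
          rw [Equiv.apply_symm_apply, hfu]
      have hxyne : ∀ j k, x j ≠ y k := by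
        intro j k h
        have h2 : x j ∈ V2 := by rw [show x j = ↑(g (e k)) from h]; exact (g (e k)).2
        exact Set.disjoint_left.mp hd (e j).2 h2
      have hxinj : Function.Injective x := fun j k h => e.injective (Subtype.ext h)
      have hyinj : Function.Injective y := fun j k h =>
        e.injective (hginj (Subtype.ext h))
      have hadjxy : ∀ j, G.Adj (x j) (y j) := fun j => hfadj (e j)
      set p : V → Fin n := fun v => (hcov v).choose with hp
      have hpspec : ∀ v, v = x (p v) ∨ v = y (p v) := fun v => (hcov v).choose_spec
      have hpuniq : ∀ v j, (v = x j ∨ v = y j) → p v = j := by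
        intro v j hj
        rcases hpspec v with h1 | h1 <;> rcases hj with h2 | h2
        · exact hxinj (h1.symm.trans h2)
        · exact absurd (h1.symm.trans h2) (hxyne (p v) j)
        · exact absurd (h2.symm.trans h1) (hxyne j (p v))
        · exact hyinj (h1.symm.trans h2)
      have hpinj : Set.InjOn p w := by
        intro u hu v hv huv
        rcases hpspec u with h1 | h1 <;> rcases hpspec v with h2 | h2
        · rw [h1, h2, huv]
        · by_contra hne
          have hAdj : G.Adj u v := by
            rw [h1, h2, huv]; exact hadjxy (p v)
          exact hwm.1 hu hv hne hAdj
        · by_contra hne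
          have hAdj : G.Adj v u := by
            rw [h1, h2, ← huv]; exact hadjxy (p u)
          exact hwm.1 hv hu (Ne.symm hne) hAdj
        · rw [h1, h2, huv]
      have hpim : p '' w ⊆ {i}ᶜ := by
        rintro j ⟨v, hv, rfl⟩
        intro hji
        rw [Set.mem_singleton_iff] at hji
        rcases hpspec v with h1 | h1
        · exact hxns (hji ▸ h1 ▸ hv)
        · exact hyns (hji ▸ h1 ▸ hv)
      have hnpos : 0 < n := i.pos
      have hcount : w.ncard ≤ n - 1 := by
        rw [← Set.ncard_image_of_injOn hpinj]
        calc (p '' w).ncard ≤ ({i}ᶜ : Set (Fin n)).ncard :=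
              Set.ncard_le_ncard hpim (Set.toFinite _)
          _ = n - 1 := by
              rw [Set.compl_eq_univ_diff, Set.ncard_diff (Set.subset_univ {i}),
                Set.ncard_univ, Set.ncard_singleton]
              simp
      omega
  · rintro ⟨n, x, y, _, _, hm, hc⟩
    exact unmixed_of_match G n x y hm hc
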